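/- Let Z be a standard complex Gaussian random variable and, for q ∈ [0,1), consider the function φ ↦ qφ − E ln I₀(φ|Z|²) on ℝ. Then: (1) for every q ∈ [0,1) this function has a unique maximizer φ₂(q), and it satisfies 0 ≤ φ₂(q) < ∞; (2) for every η ∈ (0,1), sup_{q ∈ [0,1−η]} φ₂(q) < ∞. -/

import Mathlib

open MeasureTheory ProbabilityTheory

/-- The law of a standard complex Gaussian random variable. -/
noncomputable def cgauss : Measure ℂ :=
  Measure.map (fun p : ℝ × ℝ => (p.1 : ℂ) + p.2 * Complex.I)
    ((gaussianReal 0 (1 / 2)).prod (gaussianReal 0 (1 / 2)))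

/-- The modified Bessel function of the first kind of order zero,
`I₀(x) = (2π)⁻¹ ∫_{−π}^{π} e^{x cos θ} dθ`. -/
noncomputable def I0 (x : ℝ) : ℝ :=
  (2 * Real.pi)⁻¹ * ∫ θ in Set.Ioc (-Real.pi) Real.pi, Real.exp (x * Real.cos θ)

open Set Real
open scoped NNReal ENNReal

lemma intJ (x : ℝ) : IntegrableOn (fun θ => rexp (x * cos θ)) (Ioc (-π) π) :=
  (Real.continuous_exp.comp (continuous_const.mul Real.continuous_cos)).integrableOn_Ioc

lemma vol_Ioc : (volume (Ioc (-π) π)).toReal = 2 * π := by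
  rw [Real.volume_Ioc, ENNReal.toReal_ofReal (by linarith [Real.pi_pos] : (0:ℝ) ≤ π - (-π))]
  ring

-- positivity of integrals of continuous nonneg functions positive somewhere in [0, π/2]
lemma int_pos_of_cont {g : ℝ → ℝ} (hg : Continuous g) (hnn : ∀ θ, 0 ≤ g θ)
    {θ₀ : ℝ} (h₀ : 0 ≤ θ₀) (h₁ : θ₀ ≤ π / 2) (hpos : 0 < g θ₀) :
    0 < ∫ θ in Ioc (-π) π, g θ := by
  have hInt : IntegrableOn g (Ioc (-π) π) := hg.integrableOn_Ioc
  rw [setIntegral_pos_iff_support_of_nonneg_ae (ae_of_all _ hnn) hInt]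
  have hev : ∀ᶠ θ in nhds θ₀, 0 < g θ :=
    (hg.tendsto θ₀).eventually (eventually_gt_nhds hpos)
  obtain ⟨ε, hε, h⟩ := Metric.eventually_nhds_iff.mp hev
  have hsub : Ioo (θ₀ - min ε 1) θ₀ ⊆ Function.support g ∩ Ioc (-π) π := by
    intro θ hθ
    obtain ⟨hθ1, hθ2⟩ := hθ
    have hd : dist θ θ₀ < ε := by
      rw [Real.dist_eq, abs_lt]
      constructor <;> [linarith [min_le_left ε (1:ℝ)]; linarith]
    have hπ : (2:ℝ) < π := by nlinarith [Real.pi_gt_three]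
    refine ⟨(h hd).ne', ?_, ?_⟩
    · have := min_le_right ε (1:ℝ); linarith
    · linarith
  calc (0:ENNReal) < volume (Ioo (θ₀ - min ε 1) θ₀) := by
        rw [Real.volume_Ioo]
        have : (0:ℝ) < min ε 1 := lt_min hε one_pos
        simp only [ENNReal.ofReal_pos]; linarith
    _ ≤ volume (Function.support g ∩ Ioc (-π) π) := measure_mono hsub

lemma J_ge (x : ℝ) : 2 * π ≤ ∫ θ in Ioc (-π) π, rexp (x * cos θ) := by
  have h1 : ∫ θ in Ioc (-π) π, (1 + x * cos θ) = 2 * π := by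
    rw [← intervalIntegral.integral_of_le (by linarith [Real.pi_pos] : -π ≤ π)]
    simp [intervalIntegral.integral_add, intervalIntegral.integral_const_mul,
      integral_cos, Real.sin_pi]
    ring
  calc 2 * π = ∫ θ in Ioc (-π) π, (1 + x * cos θ) := h1.symm
    _ ≤ ∫ θ in Ioc (-π) π, rexp (x * cos θ) := by
        apply setIntegral_mono_on
        · exact ((continuous_const.add (continuous_const.mul Real.continuous_cos))).integrableOn_Ioc
        · exact intJ x
        · exact measurableSet_Ioc
        · intro θ _
          have := Real.add_one_le_exp (x * cos θ); linarith

lemma I0_ge_one (x : ℝ) : 1 ≤ I0 x := by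
  have h := J_ge x
  have hπ : (0:ℝ) < 2*π := by positivity
  rw [I0, inv_mul_eq_div, le_div_iff₀ hπ]
  linarith

lemma I0_pos (x : ℝ) : 0 < I0 x := lt_of_lt_of_le one_pos (I0_ge_one x)

lemma log_I0_nonneg (x : ℝ) : 0 ≤ Real.log (I0 x) := Real.log_nonneg (I0_ge_one x)

lemma I0_zero : I0 0 = 1 := by
  rw [I0]
  simp only [zero_mul, Real.exp_zero]
  rw [setIntegral_const, smul_eq_mul, measureReal_def, vol_Ioc]
  field_simp

lemma I0_gt_one {x : ℝ} (hx : x ≠ 0) : 1 < I0 x := by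
  have h1 : ∫ θ in Ioc (-π) π, (1 + x * cos θ) = 2 * π := by
    rw [← intervalIntegral.integral_of_le (by linarith [Real.pi_pos] : -π ≤ π)]
    simp [intervalIntegral.integral_add, intervalIntegral.integral_const_mul,
      integral_cos, Real.sin_pi]
    ring
  have key : 0 < ∫ θ in Ioc (-π) π, (rexp (x * cos θ) - (1 + x * cos θ)) := by
    apply int_pos_of_cont
    · exact (Real.continuous_exp.comp (continuous_const.mul Real.continuous_cos)).sub
        (continuous_const.add (continuous_const.mul Real.continuous_cos))
    · intro θ; have := Real.add_one_le_exp (x * cos θ); simp; linarith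
    · exact le_refl (0:ℝ)
    · positivity
    · simp only [Real.cos_zero, mul_one]
      have := Real.add_one_lt_exp hx
      simp; linarith
  rw [integral_sub (intJ x)
    (by exact (continuous_const.add (continuous_const.mul Real.continuous_cos)).integrableOn_Ioc :
      IntegrableOn (fun θ => 1 + x * cos θ) (Ioc (-π) π) volume), h1] at key
  have hπ : (0:ℝ) < 2*π := by positivity
  rw [I0, inv_mul_eq_div, lt_div_iff₀ hπ]
  linarith

lemma log_I0_pos {x : ℝ} (hx : x ≠ 0) : 0 < Real.log (I0 x) :=
  Real.log_pos (I0_gt_one hx)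

lemma J_le_mul (a b : ℝ) : (∫ θ in Ioc (-π) π, rexp (a * cos θ)) ≤
    rexp |a - b| * ∫ θ in Ioc (-π) π, rexp (b * cos θ) := by
  rw [← integral_const_mul]
  apply setIntegral_mono_on (intJ a) ((intJ b).const_mul _) measurableSet_Ioc
  intro θ _
  rw [← Real.exp_add]
  apply Real.exp_le_exp.mpr
  have h1 : (a - b) * cos θ ≤ |a - b| := by
    calc (a - b) * cos θ ≤ |(a - b) * cos θ| := le_abs_self _
      _ = |a - b| * |cos θ| := abs_mul _ _
      _ ≤ |a - b| * 1 := by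
          apply mul_le_mul_of_nonneg_left (Real.abs_cos_le_one θ) (abs_nonneg _)
      _ = |a - b| := mul_one _
  nlinarith

lemma log_I0_lipschitz (a b : ℝ) : |Real.log (I0 a) - Real.log (I0 b)| ≤ |a - b| := by
  have key : ∀ u v : ℝ, Real.log (I0 u) - Real.log (I0 v) ≤ |u - v| := by
    intro u v
    have h := J_le_mul u v
    have hI : I0 u ≤ rexp |u - v| * I0 v := by
      rw [I0, I0]
      have hπ : (0:ℝ) ≤ (2*π)⁻¹ := by positivity
      calc (2*π)⁻¹ * ∫ θ in Ioc (-π) π, rexp (u * cos θ)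
          ≤ (2*π)⁻¹ * (rexp |u - v| * ∫ θ in Ioc (-π) π, rexp (v * cos θ)) :=
            mul_le_mul_of_nonneg_left h hπ
        _ = rexp |u - v| * ((2*π)⁻¹ * ∫ θ in Ioc (-π) π, rexp (v * cos θ)) := by ring
    have := Real.log_le_log (I0_pos u) hI
    rw [Real.log_mul (Real.exp_ne_zero _) (I0_pos v).ne', Real.log_exp] at this
    linarith
  rw [abs_sub_le_iff]
  refine ⟨key a b, ?_⟩
  have := key b a
  rwa [abs_sub_comm] at this

lemma log_I0_le (x : ℝ) : Real.log (I0 x) ≤ |x| := by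
  have := log_I0_lipschitz x 0
  rw [I0_zero, Real.log_one, sub_zero, sub_zero] at this
  exact le_trans (le_abs_self _) this

lemma log_I0_lower {x δ : ℝ} (hx : 0 ≤ x) (hδ0 : 0 < δ) (hδ : δ ≤ π / 2) :
    x * cos δ - Real.log (π / δ) ≤ Real.log (I0 x) := by
  have hπ : (0:ℝ) < π := Real.pi_pos
  have hδπ : δ ≤ π := by linarith
  have h1 : (∫ θ in Ioc (-δ) δ, rexp (x * cos δ)) ≤ ∫ θ in Ioc (-δ) δ, rexp (x * cos θ) := by
    apply setIntegral_mono_on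
    · exact continuous_const.integrableOn_Ioc
    · exact (Real.continuous_exp.comp (continuous_const.mul Real.continuous_cos)).integrableOn_Ioc
    · exact measurableSet_Ioc
    · intro θ hθ
      apply Real.exp_le_exp.mpr
      apply mul_le_mul_of_nonneg_left _ hx
      have habs : |θ| ≤ δ := by
        rw [abs_le]; exact ⟨le_of_lt hθ.1, hθ.2⟩
      calc cos δ ≤ cos |θ| := by
            apply Real.cos_le_cos_of_nonneg_of_le_pi (abs_nonneg θ) hδπ habs
        _ = cos θ := Real.cos_abs θ
  have h2 : (∫ θ in Ioc (-δ) δ, rexp (x * cos θ)) ≤ ∫ θ in Ioc (-π) π, rexp (x * cos θ) := by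
    apply setIntegral_mono_set (intJ x)
    · exact ae_of_all _ (fun θ => (Real.exp_pos _).le)
    · apply HasSubset.Subset.eventuallyLE
      apply Ioc_subset_Ioc <;> linarith
  have h3 : (∫ θ in Ioc (-δ) δ, rexp (x * cos δ)) = 2 * δ * rexp (x * cos δ) := by
    rw [setIntegral_const, smul_eq_mul, measureReal_def, Real.volume_Ioc,
      ENNReal.toReal_ofReal (by linarith : (0:ℝ) ≤ δ - (-δ))]
    ring
  have hJ : 2 * δ * rexp (x * cos δ) ≤ ∫ θ in Ioc (-π) π, rexp (x * cos θ) := by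
    rw [← h3]; exact h1.trans h2
  have hI : (δ / π) * rexp (x * cos δ) ≤ I0 x := by
    rw [I0]
    have e1 : (δ / π) * rexp (x * cos δ) = (2*π)⁻¹ * (2 * δ * rexp (x * cos δ)) := by
      field_simp
    rw [e1]
    exact mul_le_mul_of_nonneg_left hJ (by positivity)
  have hlog := Real.log_le_log (by positivity) hI
  rw [Real.log_mul (by positivity : (δ/π:ℝ) ≠ 0) (Real.exp_ne_zero _), Real.log_exp,
    Real.log_div hδ0.ne' hπ.ne'] at hlog
  rw [Real.log_div hπ.ne' hδ0.ne']
  linarith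

lemma I0_sq_mid_lt {x y : ℝ} (hxy : x ≠ y) : I0 ((x+y)/2) ^ 2 < I0 x * I0 y := by
  set A := ∫ θ in Ioc (-π) π, rexp (x * cos θ) with hA
  set C := ∫ θ in Ioc (-π) π, rexp (y * cos θ) with hC
  set B := ∫ θ in Ioc (-π) π, rexp ((x+y)/2 * cos θ) with hB
  have hCpos : 0 < C := lt_of_lt_of_le (by positivity) (J_ge y)
  set t := B / C with ht
  -- pointwise expansion
  have hexp : ∀ θ : ℝ, (rexp (x/2 * cos θ) - t * rexp (y/2 * cos θ))^2
      = rexp (x * cos θ) - 2 * t * rexp ((x+y)/2 * cos θ) + t^2 * rexp (y * cos θ) := by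
    intro θ
    have e1 : rexp (x/2 * cos θ) ^ 2 = rexp (x * cos θ) := by
      rw [sq, ← Real.exp_add]; congr 1; ring
    have e2 : rexp (y/2 * cos θ) ^ 2 = rexp (y * cos θ) := by
      rw [sq, ← Real.exp_add]; congr 1; ring
    have e3 : rexp (x/2 * cos θ) * rexp (y/2 * cos θ) = rexp ((x+y)/2 * cos θ) := by
      rw [← Real.exp_add]; congr 1; ring
    linear_combination e1 + t^2 * e2 - 2*t*e3
  have hEint : ∀ c : ℝ, IntegrableOn (fun θ => rexp (c * cos θ)) (Ioc (-π) π) := intJ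
  have hEval : (∫ θ in Ioc (-π) π, (rexp (x/2 * cos θ) - t * rexp (y/2 * cos θ))^2)
      = A - 2 * t * B + t^2 * C := by
    have : (fun θ => (rexp (x/2 * cos θ) - t * rexp (y/2 * cos θ))^2)
        = fun θ => rexp (x * cos θ) - 2 * t * rexp ((x+y)/2 * cos θ) + t^2 * rexp (y * cos θ) := by
      funext θ; rw [hexp θ]
    have ha : Integrable (fun θ => rexp (x * cos θ) - 2 * t * rexp ((x+y)/2 * cos θ))
        (volume.restrict (Ioc (-π) π)) := (hEint x).sub ((hEint ((x+y)/2)).const_mul (2*t))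
    have hb : Integrable (fun θ => t^2 * rexp (y * cos θ)) (volume.restrict (Ioc (-π) π)) :=
      (hEint y).const_mul (t^2)
    rw [this, integral_add ha hb, integral_sub (hEint x) ((hEint ((x+y)/2)).const_mul (2*t)),
      integral_const_mul, integral_const_mul]
  have hg : Continuous fun θ => (rexp (x/2 * cos θ) - t * rexp (y/2 * cos θ))^2 := by
    apply Continuous.pow
    exact (Real.continuous_exp.comp (continuous_const.mul Real.continuous_cos)).sub
      (continuous_const.mul (Real.continuous_exp.comp (continuous_const.mul Real.continuous_cos)))
  have hEpos : 0 < ∫ θ in Ioc (-π) π, (rexp (x/2 * cos θ) - t * rexp (y/2 * cos θ))^2 := by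
    by_cases h0 : 0 < (rexp (x/2 * cos 0) - t * rexp (y/2 * cos 0))^2
    · exact int_pos_of_cont hg (fun θ => sq_nonneg _) le_rfl (by positivity) h0
    · have hp2 : 0 < (rexp (x/2 * cos (π/2)) - t * rexp (y/2 * cos (π/2)))^2 := by
        rw [Real.cos_pi_div_two]
        simp only [mul_zero, Real.exp_zero, mul_one]
        have h0' : rexp (x/2 * cos 0) - t * rexp (y/2 * cos 0) = 0 := by
          by_contra hne
          exact h0 (by positivity)
        rw [Real.cos_zero, mul_one, mul_one] at h0'
        have hne : (1 : ℝ) - t ≠ 0 := by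
          intro hteq
          have ht1 : t = 1 := by linarith
          rw [ht1, one_mul] at h0'
          have : x/2 = y/2 := Real.exp_injective (by linarith)
          exact hxy (by linarith)
        exact pow_two_pos_of_ne_zero hne
      exact int_pos_of_cont hg (fun θ => sq_nonneg _) (by positivity)
        (le_refl (π/2)) hp2
  rw [hEval] at hEpos
  have hBB : B^2 < A * C := by
    rw [ht] at hEpos
    have e : A - 2 * (B/C) * B + (B/C)^2 * C = A - B^2/C := by
      field_simp; ring
    rw [e] at hEpos
    have := (div_lt_iff₀ hCpos).mp (by linarith : B^2/C < A)
    linarith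
  have h2π : (0:ℝ) < (2*π)⁻¹ := by positivity
  rw [I0, I0, I0, ← hA, ← hC, ← hB]
  have hk := mul_lt_mul_of_pos_left hBB (mul_pos h2π h2π)
  nlinarith [hk]

lemma log_I0_strict_mid {x y : ℝ} (hxy : x ≠ y) :
    Real.log (I0 ((x+y)/2)) < (Real.log (I0 x) + Real.log (I0 y)) / 2 := by
  have h := I0_sq_mid_lt hxy
  have hm := I0_pos ((x+y)/2)
  have hl := Real.log_lt_log (by positivity) h
  rw [Real.log_pow, Real.log_mul (I0_pos x).ne' (I0_pos y).ne'] at hl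
  push_cast at hl
  linarith

section gauss
open ProbabilityTheory

lemma half_ne : ((1:ℝ≥0)/2) ≠ 0 := by norm_num

lemma pdf_eq (x : ℝ) : gaussianPDFReal 0 (1/2) x = (Real.sqrt π)⁻¹ * rexp (-x^2) := by
  rw [gaussianPDFReal]
  norm_num
  have h2 : Real.sqrt 2 ≠ 0 := by positivity
  field_simp

lemma gauss_integral_repr (g : ℝ → ℝ) :
    ∫ x, g x ∂(gaussianReal 0 (1/2)) = ∫ x, gaussianPDFReal 0 (1/2) x * g x := by
  rw [gaussianReal_of_var_ne_zero 0 half_ne]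
  have hm : Measurable fun x => Real.toNNReal (gaussianPDFReal 0 (1/2) x) :=
    (measurable_gaussianPDFReal 0 (1/2)).real_toNNReal
  have : (volume.withDensity (gaussianPDF 0 (1/2))) =
      volume.withDensity (fun x => (Real.toNNReal (gaussianPDFReal 0 (1/2) x) : ENNReal)) := rfl
  rw [this, integral_withDensity_eq_integral_smul hm g]
  apply integral_congr_ae
  filter_upwards with x
  rw [NNReal.smul_def, smul_eq_mul, Real.coe_toNNReal _ (gaussianPDFReal_nonneg 0 (1/2) x)]

lemma gauss_integrable_repr (g : ℝ → ℝ) :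
    Integrable g (gaussianReal 0 (1/2)) ↔
      Integrable (fun x => gaussianPDFReal 0 (1/2) x * g x) volume := by
  rw [gaussianReal_of_var_ne_zero 0 half_ne]
  have hm : Measurable fun x => Real.toNNReal (gaussianPDFReal 0 (1/2) x) :=
    (measurable_gaussianPDFReal 0 (1/2)).real_toNNReal
  have h : (volume.withDensity (gaussianPDF 0 (1/2))) =
      volume.withDensity (fun x => (Real.toNNReal (gaussianPDFReal 0 (1/2) x) : ENNReal)) := rfl
  rw [h, integrable_withDensity_iff_integrable_smul hm]
  constructor <;> intro hi <;> apply hi.congr <;> filter_upwards with x <;>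
    rw [NNReal.smul_def, smul_eq_mul, Real.coe_toNNReal _ (gaussianPDFReal_nonneg 0 (1/2) x)]

lemma int_sq_exp : Integrable (fun x : ℝ => x^2 * rexp (-x^2)) := by
  have := integrable_rpow_mul_exp_neg_mul_sq (b := 1) one_pos (s := 2) (by norm_num)
  apply this.congr
  filter_upwards with x
  rw [show ((2:ℝ) = ((2:ℕ):ℝ)) by norm_num, Real.rpow_natCast, neg_mul, one_mul]

lemma int_exp_sq : Integrable (fun x : ℝ => rexp (-x^2)) := by
  have := integrable_exp_neg_mul_sq (b := 1) one_pos
  apply this.congr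
  filter_upwards with x
  rw [neg_mul, one_mul]

lemma int_x_exp_sq : Integrable (fun x : ℝ => x * rexp (-x^2)) := by
  have := integrable_mul_exp_neg_mul_sq (b := 1) one_pos
  apply this.congr
  filter_upwards with x
  rw [neg_mul, one_mul]

lemma sq_exp_integral : ∫ x : ℝ, x^2 * rexp (-x^2) = Real.sqrt π / 2 := by
  have hderiv : ∀ x : ℝ, HasDerivAt (fun x => x * rexp (-x^2))
      (rexp (-x^2) - 2*(x^2*rexp (-x^2))) x := by
    intro x
    have h1 : HasDerivAt (fun x : ℝ => -x^2) (-(2*x)) x := by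
      simpa using (hasDerivAt_pow 2 x).fun_neg
    have h2 := h1.exp
    have h3 := (hasDerivAt_id' (x := x)).fun_mul h2
    exact h3.congr_deriv (by ring)
  have hzero : ∫ x : ℝ, (rexp (-x^2) - 2*(x^2*rexp (-x^2))) = 0 :=
    integral_eq_zero_of_hasDerivAt_of_integrable hderiv
      (int_exp_sq.sub (int_sq_exp.const_mul 2)) int_x_exp_sq
  have hsplit : ∫ x : ℝ, (rexp (-x^2) - 2*(x^2*rexp (-x^2)))
      = (∫ x : ℝ, rexp (-x^2)) - 2 * ∫ x : ℝ, x^2 * rexp (-x^2) := by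
    rw [integral_sub int_exp_sq (int_sq_exp.const_mul 2), integral_const_mul]
  have hgauss : ∫ x : ℝ, rexp (-x^2) = Real.sqrt π := by
    have := integral_gaussian 1
    simp only [neg_mul, one_mul, div_one] at this
    exact this
  rw [hsplit, hgauss] at hzero
  linarith

lemma moment2 : ∫ x, x^2 ∂(gaussianReal 0 (1/2)) = 1/2 := by
  rw [gauss_integral_repr]
  have : (fun x : ℝ => gaussianPDFReal 0 (1/2) x * x^2)
      = fun x => (Real.sqrt π)⁻¹ * (x^2 * rexp (-x^2)) := by
    funext x; rw [pdf_eq]; ring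
  rw [this, integral_const_mul, sq_exp_integral]
  have hπ : Real.sqrt π ≠ 0 := by positivity
  field_simp

lemma moment2_int : Integrable (fun x : ℝ => x^2) (gaussianReal 0 (1/2)) := by
  rw [gauss_integrable_repr]
  have : (fun x : ℝ => gaussianPDFReal 0 (1/2) x * x^2)
      = fun x => (Real.sqrt π)⁻¹ * (x^2 * rexp (-x^2)) := by
    funext x; rw [pdf_eq]; ring
  rw [this]
  exact int_sq_exp.const_mul _

lemma measurable_T : Measurable (fun p : ℝ × ℝ => (p.1 : ℂ) + p.2 * Complex.I) := by
  fun_prop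

instance : IsProbabilityMeasure cgauss := by
  rw [cgauss]
  exact Measure.isProbabilityMeasure_map measurable_T.aemeasurable

lemma normSq_T (p : ℝ × ℝ) : Complex.normSq ((p.1 : ℂ) + p.2 * Complex.I) = p.1^2 + p.2^2 := by
  rw [Complex.normSq_add_mul_I]

lemma int_normSq_prod : Integrable (fun p : ℝ × ℝ => p.1^2 + p.2^2)
    ((gaussianReal 0 (1/2)).prod (gaussianReal 0 (1/2))) := by
  apply Integrable.add
  · have := moment2_int.mul_prod (integrable_const (1:ℝ))
      (ν := gaussianReal 0 (1/2))
    apply this.congr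
    filter_upwards with p
    rw [mul_one]
  · have := (integrable_const (1:ℝ)).mul_prod moment2_int
      (μ := gaussianReal 0 (1/2))
    apply this.congr
    filter_upwards with p
    rw [one_mul]

lemma normSq_integrable : Integrable Complex.normSq cgauss := by
  rw [cgauss, integrable_map_measure
    (Complex.continuous_normSq.aestronglyMeasurable) measurable_T.aemeasurable]
  apply int_normSq_prod.congr
  filter_upwards with p
  rw [Function.comp_apply, normSq_T]

lemma normSq_integral : ∫ z, Complex.normSq z ∂cgauss = 1 := by
  rw [cgauss, integral_map measurable_T.aemeasurable
    Complex.continuous_normSq.aestronglyMeasurable]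
  have : ∫ p : ℝ × ℝ, Complex.normSq ((p.1 : ℂ) + p.2 * Complex.I)
      ∂((gaussianReal 0 (1/2)).prod (gaussianReal 0 (1/2)))
      = ∫ p : ℝ × ℝ, (p.1^2 + p.2^2)
      ∂((gaussianReal 0 (1/2)).prod (gaussianReal 0 (1/2))) := by
    apply integral_congr_ae
    filter_upwards with p
    rw [normSq_T]
  rw [this, integral_add]
  · have h1 := integral_fun_fst (μ := gaussianReal 0 (1/2)) (ν := gaussianReal 0 (1/2))
      (fun x : ℝ => x^2)
    have h2 := integral_fun_snd (μ := gaussianReal 0 (1/2)) (ν := gaussianReal 0 (1/2))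
      (fun x : ℝ => x^2)
    rw [h1, h2, moment2]
    simp
    norm_num
  · have := moment2_int.mul_prod (integrable_const (1:ℝ)) (ν := gaussianReal 0 (1/2))
    apply this.congr; filter_upwards with p; rw [mul_one]
  · have := (integrable_const (1:ℝ)).mul_prod moment2_int (μ := gaussianReal 0 (1/2))
    apply this.congr; filter_upwards with p; rw [one_mul]

lemma normSq_ae_ne_zero : ∀ᵐ z ∂cgauss, Complex.normSq z ≠ 0 := by
  rw [ae_iff]
  have hset : {z : ℂ | ¬ Complex.normSq z ≠ 0} = {(0:ℂ)} := by
    ext z; simp [Complex.normSq_eq_zero]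
  rw [hset, cgauss, Measure.map_apply measurable_T (measurableSet_singleton 0)]
  have hpre : (fun p : ℝ × ℝ => (p.1 : ℂ) + p.2 * Complex.I) ⁻¹' {(0:ℂ)}
      = ({(0:ℝ)} : Set ℝ) ×ˢ ({(0:ℝ)} : Set ℝ) := by
    ext p
    simp [Complex.ext_iff, Prod.ext_iff]
  rw [hpre, Measure.prod_prod]
  have h0 : (gaussianReal 0 (1/2)) {(0:ℝ)} = 0 :=
    gaussianReal_absolutelyContinuous 0 half_ne (measure_singleton 0)
  rw [h0, mul_zero]

end gauss

noncomputable def Gf (φ : ℝ) : ℝ := ∫ z, Real.log (I0 (φ * Complex.normSq z)) ∂cgauss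

lemma logI0_cont : Continuous (fun u => Real.log (I0 u)) := by
  have : LipschitzWith 1 (fun u => Real.log (I0 u)) := by
    apply LipschitzWith.of_dist_le_mul
    intro a b
    rw [Real.dist_eq, Real.dist_eq, NNReal.coe_one, one_mul]
    exact log_I0_lipschitz a b
  exact this.continuous

lemma Gf_int (φ : ℝ) : Integrable (fun z => Real.log (I0 (φ * Complex.normSq z))) cgauss := by
  apply Integrable.mono (normSq_integrable.const_mul |φ|)
  · exact (logI0_cont.comp (continuous_const.mul Complex.continuous_normSq)).aestronglyMeasurable
  · filter_upwards with z
    rw [Real.norm_eq_abs, Real.norm_eq_abs, abs_of_nonneg (log_I0_nonneg _),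
      abs_of_nonneg (mul_nonneg (abs_nonneg _) (Complex.normSq_nonneg z))]
    calc Real.log (I0 (φ * Complex.normSq z)) ≤ |φ * Complex.normSq z| := log_I0_le _
      _ = |φ| * Complex.normSq z := by
          rw [abs_mul, abs_of_nonneg (Complex.normSq_nonneg z)]

lemma Gf_nonneg (φ : ℝ) : 0 ≤ Gf φ :=
  integral_nonneg fun z => log_I0_nonneg _

lemma Gf_zero : Gf 0 = 0 := by
  rw [Gf]
  have : ∀ z : ℂ, Real.log (I0 ((0:ℝ) * Complex.normSq z)) = 0 := by
    intro z; rw [zero_mul, I0_zero, Real.log_one]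
  simp only [this, integral_zero]

lemma Gf_pos {φ : ℝ} (hφ : φ ≠ 0) : 0 < Gf φ := by
  rw [Gf, integral_pos_iff_support_of_nonneg_ae (ae_of_all _ fun z => log_I0_nonneg _) (Gf_int φ)]
  have hae : ∀ᵐ z ∂cgauss, z ∈ Function.support fun z => Real.log (I0 (φ * Complex.normSq z)) := by
    filter_upwards [normSq_ae_ne_zero] with z hz
    exact (log_I0_pos (mul_ne_zero hφ hz)).ne'
  by_contra h
  push_neg at h
  have h0 : cgauss (Function.support fun z => Real.log (I0 (φ * Complex.normSq z))) = 0 :=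
    le_antisymm h zero_le
  have := measure_univ (μ := cgauss)
  have hcompl : cgauss (Function.support fun z => Real.log (I0 (φ * Complex.normSq z)))ᶜ = 0 :=
    ae_iff.mp hae
  have : (1 : ENNReal) ≤ 0 := by
    calc (1:ENNReal) = cgauss Set.univ := (measure_univ).symm
      _ ≤ cgauss (Function.support fun z => Real.log (I0 (φ * Complex.normSq z)))
          + cgauss (Function.support fun z => Real.log (I0 (φ * Complex.normSq z)))ᶜ := by
          rw [← Set.union_compl_self (Function.support fun z => Real.log (I0 (φ * Complex.normSq z)))]
          exact measure_union_le _ _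
      _ = 0 := by rw [h0, hcompl, add_zero]
  simp at this

lemma Gf_dist (a b : ℝ) : |Gf a - Gf b| ≤ |a - b| := by
  rw [Gf, Gf, ← integral_sub (Gf_int a) (Gf_int b)]
  calc |∫ z, (Real.log (I0 (a * Complex.normSq z)) - Real.log (I0 (b * Complex.normSq z))) ∂cgauss|
      ≤ ∫ z, |Real.log (I0 (a * Complex.normSq z)) - Real.log (I0 (b * Complex.normSq z))| ∂cgauss :=
by
        have h := norm_integral_le_integral_norm (μ := cgauss) (fun z => Real.log (I0 (a * Complex.normSq z)) - Real.log (I0 (b * Complex.normSq z)))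
        simpa [Real.norm_eq_abs] using h
    _ ≤ ∫ z, |a - b| * Complex.normSq z ∂cgauss := by
        apply integral_mono ((Gf_int a).sub (Gf_int b)).abs (normSq_integrable.const_mul _)
        intro z
        calc |Real.log (I0 (a * Complex.normSq z)) - Real.log (I0 (b * Complex.normSq z))|
            ≤ |a * Complex.normSq z - b * Complex.normSq z| := log_I0_lipschitz _ _
          _ = |a - b| * Complex.normSq z := by
              rw [← sub_mul, abs_mul, abs_of_nonneg (Complex.normSq_nonneg z)]
    _ = |a - b| := by rw [integral_const_mul, normSq_integral, mul_one]

lemma Gf_cont : Continuous Gf := by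
  have : LipschitzWith 1 Gf := by
    apply LipschitzWith.of_dist_le_mul
    intro a b
    rw [Real.dist_eq, NNReal.coe_one, one_mul, Real.dist_eq]
    exact Gf_dist a b
  exact this.continuous

lemma Gf_lower {φ δ : ℝ} (hφ : 0 ≤ φ) (hδ0 : 0 < δ) (hδ : δ ≤ π / 2) :
    φ * Real.cos δ - Real.log (π / δ) ≤ Gf φ := by
  have hint : Integrable (fun z : ℂ => φ * Real.cos δ * Complex.normSq z - Real.log (π / δ))
      cgauss := (normSq_integrable.const_mul _).sub (integrable_const _)
  have h1 : ∫ z, (φ * Real.cos δ * Complex.normSq z - Real.log (π / δ)) ∂cgauss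
      = φ * Real.cos δ - Real.log (π / δ) := by
    rw [integral_sub (normSq_integrable.const_mul _) (integrable_const _),
      integral_const_mul, normSq_integral, integral_const]
    simp
  rw [Gf, ← h1]
  apply integral_mono hint (Gf_int φ)
  intro z
  have := log_I0_lower (mul_nonneg hφ (Complex.normSq_nonneg z)) hδ0 hδ
  calc φ * Real.cos δ * Complex.normSq z - Real.log (π / δ)
      = (φ * Complex.normSq z) * Real.cos δ - Real.log (π / δ) := by ring
    _ ≤ Real.log (I0 (φ * Complex.normSq z)) := this

lemma Gf_strict_mid {a b : ℝ} (hab : a ≠ b) : Gf ((a + b)/2) < (Gf a + Gf b)/2 := by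
  set D := fun z : ℂ => (Real.log (I0 (a * Complex.normSq z))
    + Real.log (I0 (b * Complex.normSq z)))/2
    - Real.log (I0 ((a + b)/2 * Complex.normSq z)) with hD
  have hDnn : ∀ z, 0 ≤ D z := by
    intro z
    rw [hD]
    by_cases hz : Complex.normSq z = 0
    · simp [hz, I0_zero]
    · have hne : a * Complex.normSq z ≠ b * Complex.normSq z := by
        intro h
        exact hab (mul_right_cancel₀ hz h)
      have := log_I0_strict_mid hne
      have he : (a * Complex.normSq z + b * Complex.normSq z)/2
          = (a + b)/2 * Complex.normSq z := by ring
      rw [he] at this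
      linarith
  have hDpos : ∀ᵐ z ∂cgauss, 0 < D z := by
    filter_upwards [normSq_ae_ne_zero] with z hz
    rw [hD]
    have hne : a * Complex.normSq z ≠ b * Complex.normSq z := by
      intro h
      exact hab (mul_right_cancel₀ hz h)
    have := log_I0_strict_mid hne
    have he : (a * Complex.normSq z + b * Complex.normSq z)/2
        = (a + b)/2 * Complex.normSq z := by ring
    rw [he] at this
    linarith
  have hDint : Integrable D cgauss := by
    rw [hD]
    exact (((Gf_int a).add (Gf_int b)).div_const 2).sub (Gf_int _)
  have hDpos' : 0 < ∫ z, D z ∂cgauss := by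
    rw [integral_pos_iff_support_of_nonneg_ae (ae_of_all _ hDnn) hDint]
    by_contra h
    push_neg at h
    have h0 : cgauss (Function.support D) = 0 := le_antisymm h zero_le
    have hae : ∀ᵐ z ∂cgauss, z ∈ Function.support D := by
      filter_upwards [hDpos] with z hz
      exact hz.ne'
    have hcompl : cgauss (Function.support D)ᶜ = 0 := ae_iff.mp hae
    have : (1 : ENNReal) ≤ 0 := by
      calc (1:ENNReal) = cgauss Set.univ := (measure_univ).symm
        _ ≤ cgauss (Function.support D) + cgauss (Function.support D)ᶜ := by
            rw [← Set.union_compl_self (Function.support D)]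
            exact measure_union_le _ _
        _ = 0 := by rw [h0, hcompl, add_zero]
    simp at this
  have hval : ∫ z, D z ∂cgauss = (Gf a + Gf b)/2 - Gf ((a + b)/2) := by
    have h1 : Integrable (fun z : ℂ => (Real.log (I0 (a * Complex.normSq z))
        + Real.log (I0 (b * Complex.normSq z)))/2) cgauss :=
      ((Gf_int a).add (Gf_int b)).div_const 2
    have h2 : Integrable (fun z : ℂ => Real.log (I0 (a * Complex.normSq z))
        + Real.log (I0 (b * Complex.normSq z))) cgauss := (Gf_int a).add (Gf_int b)
    rw [hD, integral_sub h1 (Gf_int _), integral_div, integral_add (Gf_int a) (Gf_int b)]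
    rfl
  rw [hval] at hDpos'
  linarith

lemma exists_delta {q : ℝ} (hq : q < 1) : ∃ δ : ℝ, 0 < δ ∧ δ ≤ π/2 ∧ q < Real.cos δ := by
  have hc : Filter.Tendsto Real.cos (nhds 0) (nhds 1) := by
    have := Real.continuous_cos.tendsto 0
    rwa [Real.cos_zero] at this
  have hev : ∀ᶠ δ in nhds (0:ℝ), q < Real.cos δ := hc.eventually (eventually_gt_nhds hq)
  obtain ⟨ε, hε, h⟩ := Metric.eventually_nhds_iff.mp hev
  have hπ := Real.pi_pos
  refine ⟨min (ε/2) (π/2), lt_min (by linarith) (by linarith), min_le_right _ _, ?_⟩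
  apply h
  rw [Real.dist_eq, sub_zero, abs_of_pos (lt_min (by linarith) (by linarith))]
  calc min (ε/2) (π/2) ≤ ε/2 := min_le_left _ _
    _ < ε := by linarith

lemma max_unique {q φ₁ φ₂ : ℝ} (h1 : ∀ φ, q*φ - Gf φ ≤ q*φ₁ - Gf φ₁)
    (h2 : ∀ φ, q*φ - Gf φ ≤ q*φ₂ - Gf φ₂) : φ₁ = φ₂ := by
  by_contra hne
  have hmid := Gf_strict_mid hne
  have ha := h1 ((φ₁+φ₂)/2)
  have hb := h1 φ₂
  have hc := h2 φ₁
  have e : q*((φ₁+φ₂)/2) = (q*φ₁ + q*φ₂)/2 := by ring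
  linarith

lemma max_nonneg {q φ₀ : ℝ} (hq0 : 0 ≤ q) (h : ∀ φ, q*φ - Gf φ ≤ q*φ₀ - Gf φ₀) : 0 ≤ φ₀ := by
  by_contra hneg
  push_neg at hneg
  have h0 := h 0
  rw [mul_zero, Gf_zero, sub_zero] at h0
  have hgp : 0 < Gf φ₀ := Gf_pos hneg.ne
  nlinarith [mul_nonneg hq0 (neg_nonneg.mpr hneg.le)]

lemma max_le_bound {q φ₀ δ : ℝ} (hq0 : 0 ≤ q) (hδ0 : 0 < δ) (hδπ : δ ≤ π/2)
    (hδq : q < Real.cos δ) (h : ∀ φ, q*φ - Gf φ ≤ q*φ₀ - Gf φ₀) :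
    φ₀ ≤ Real.log (π/δ) / (Real.cos δ - q) := by
  have hφ0 : 0 ≤ φ₀ := max_nonneg hq0 h
  have h0 := h 0
  rw [mul_zero, Gf_zero, sub_zero] at h0
  have hlow := Gf_lower hφ0 hδ0 hδπ
  have key : φ₀ * (Real.cos δ - q) ≤ Real.log (π/δ) := by nlinarith
  rw [le_div_iff₀ (by linarith : (0:ℝ) < Real.cos δ - q)]
  linarith

lemma max_exists {q δ : ℝ} (hq0 : 0 ≤ q) (hδ0 : 0 < δ) (hδπ : δ ≤ π/2)
    (hδq : q < Real.cos δ) : ∃ φ₀ : ℝ, ∀ φ, q*φ - Gf φ ≤ q*φ₀ - Gf φ₀ := by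
  set R := max 1 (Real.log (π/δ) / (Real.cos δ - q)) with hR
  have hR1 : (1:ℝ) ≤ R := le_max_left _ _
  have hcos : (0:ℝ) < Real.cos δ - q := by linarith
  have hFcont : Continuous fun φ : ℝ => q*φ - Gf φ :=
    (continuous_const.mul continuous_id).sub Gf_cont
  obtain ⟨φ₀, hmem₀, hmax₀⟩ := isCompact_Icc.exists_isMaxOn
    (⟨0, left_mem_Icc.mpr (by linarith)⟩ : (Icc (0:ℝ) R).Nonempty) hFcont.continuousOn
  refine ⟨φ₀, fun φ => ?_⟩
  by_cases hmem : φ ∈ Icc (0:ℝ) R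
  · exact hmax₀ hmem
  · have h0 : q*0 - Gf 0 ≤ q*φ₀ - Gf φ₀ := hmax₀ (left_mem_Icc.mpr (by linarith))
    rw [mul_zero, Gf_zero, sub_zero] at h0
    rw [mem_Icc, not_and_or, not_le, not_le] at hmem
    rcases hmem with hneg | hbig
    · have hg := Gf_nonneg φ
      nlinarith [mul_nonneg hq0 (neg_nonneg.mpr hneg.le)]
    · have hφpos : (0:ℝ) ≤ φ := by linarith
      have hlow := Gf_lower hφpos hδ0 hδπ
      have hRb : Real.log (π/δ) / (Real.cos δ - q) ≤ R := le_max_right _ _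
      have hlogR : Real.log (π/δ) ≤ R * (Real.cos δ - q) := by
        rw [div_le_iff₀ hcos] at hRb
        linarith
      nlinarith


/-- For every `q ∈ [0,1)`, the function `φ ↦ qφ − E ln I₀(φ|Z|²)` has a unique maximizer
`φ₂(q)`, which is nonnegative (and finite); moreover for every `η ∈ (0,1)` the maximizers
are bounded uniformly over `q ∈ [0, 1−η]`. -/
theorem bessel_variational_problem :
    (∀ q ∈ Set.Ico (0 : ℝ) 1, ∃! phi0 : ℝ, ∀ phi : ℝ,
      q * phi - ∫ z, Real.log (I0 (phi * Complex.normSq z)) ∂cgauss ≤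
        q * phi0 - ∫ z, Real.log (I0 (phi0 * Complex.normSq z)) ∂cgauss) ∧
    (∀ q ∈ Set.Ico (0 : ℝ) 1, ∀ phi0 : ℝ,
      (∀ phi : ℝ,
        q * phi - ∫ z, Real.log (I0 (phi * Complex.normSq z)) ∂cgauss ≤
          q * phi0 - ∫ z, Real.log (I0 (phi0 * Complex.normSq z)) ∂cgauss) →
      0 ≤ phi0) ∧
    (∀ η ∈ Set.Ioo (0 : ℝ) 1, ∃ B : ℝ, ∀ q ∈ Set.Icc (0 : ℝ) (1 - η), ∀ phi0 : ℝ,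
      (∀ phi : ℝ,
        q * phi - ∫ z, Real.log (I0 (phi * Complex.normSq z)) ∂cgauss ≤
          q * phi0 - ∫ z, Real.log (I0 (phi0 * Complex.normSq z)) ∂cgauss) →
      phi0 ≤ B) := by
  have hGf : ∀ φ : ℝ, (∫ z, Real.log (I0 (φ * Complex.normSq z)) ∂cgauss) = Gf φ :=
    fun _ => rfl
  refine ⟨?_, ?_, ?_⟩
  · intro q hq
    obtain ⟨δ, hδ0, hδπ, hδq⟩ := exists_delta hq.2
    obtain ⟨φ₀, hφ₀⟩ := max_exists hq.1 hδ0 hδπ hδq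
    refine ⟨φ₀, fun φ => ?_, fun ψ hψ => ?_⟩
    · simp only [hGf]; exact hφ₀ φ
    · simp only [hGf] at hψ
      exact max_unique hψ hφ₀
  · intro q hq φ₀ hφ₀
    simp only [hGf] at hφ₀
    exact max_nonneg hq.1 hφ₀
  · intro η hη
    obtain ⟨δ, hδ0, hδπ, hδq⟩ := exists_delta (show (1 - η : ℝ) < 1 by linarith [hη.1])
    refine ⟨Real.log (π/δ) / (Real.cos δ - (1 - η)), fun q hq φ₀ hφ₀ => ?_⟩
    simp only [hGf] at hφ₀
    have hb := max_le_bound hq.1 hδ0 hδπ (lt_of_le_of_lt hq.2 hδq) hφ₀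
    have hcos1 : (0:ℝ) < Real.cos δ - (1 - η) := by linarith
    have hcos2 : (0:ℝ) < Real.cos δ - q := by linarith [hq.2]
    have hlog : (0:ℝ) ≤ Real.log (π/δ) := by
      apply Real.log_nonneg
      rw [le_div_iff₀ hδ0]
      have := Real.pi_gt_three
      linarith
    calc φ₀ ≤ Real.log (π/δ) / (Real.cos δ - q) := hb
      _ ≤ Real.log (π/δ) / (Real.cos δ - (1 - η)) := by
          apply div_le_div_of_nonneg_left hlog hcos1 ?_
          linarith [hq.2]
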